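/- Let f(x) be an irreducible polynomial in ℤ[x] of degree d ≥ 1 and let p be an odd prime. If f(x^p) is reducible in ℤ[x], then every irreducible factor of f(x^p) in ℤ[x] has degree at least d; in particular, f(x^p) has at most p irreducible factors (with multiplicity) in ℤ[x]. -/

import Mathlib

open Polynomial

lemma natDeg_assoc {R : Type*} [CommRing R] [NoZeroDivisors R] {p q : Polynomial R}
    (h : Associated p q) (hq : q ≠ 0) : p.natDegree = q.natDegree := by
  have hp : p ≠ 0 := fun h0 => hq ((associated_zero_iff_eq_zero q).mp (h0 ▸ h).symm)
  exact le_antisymm (Polynomial.natDegree_le_of_dvd h.dvd hq)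
    (Polynomial.natDegree_le_of_dvd h.symm.dvd hp)

lemma irred_isPrimitive (f : Polynomial ℤ) (hf : Irreducible f) (hd1 : 1 ≤ f.natDegree) :
    f.IsPrimitive := by
  intro r hr
  obtain ⟨h, hh⟩ := hr
  rcases hf.isUnit_or_isUnit hh with h1 | h2
  · exact isUnit_C.mp h1
  · exfalso
    have := natDegree_eq_zero_of_isUnit h2
    have h3 : f.natDegree ≤ (C r).natDegree + h.natDegree := hh ▸ natDegree_mul_le
    simp [this, natDegree_C] at h3
    omega

theorem comp_X_pow_prime_factors (f : Polynomial ℤ) (hf : Irreducible f)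
    (d : ℕ) (hd : f.natDegree = d) (hd1 : 1 ≤ d)
    (p : ℕ) (hp : p.Prime) (hodd : Odd p)
    (hred : ¬ Irreducible (f.comp (X ^ p))) :
    (∀ g : Polynomial ℤ, Irreducible g → g ∣ f.comp (X ^ p) → d ≤ g.natDegree) ∧
    (∀ s : Multiset (Polynomial ℤ), (∀ a ∈ s, Irreducible a) →
      Associated s.prod (f.comp (X ^ p)) → Multiset.card s ≤ p) := by
  have hppos : 0 < p := hp.pos
  have hfprim : f.IsPrimitive := irred_isPrimitive f hf (hd ▸ hd1)
  have hf0 : f ≠ 0 := hf.ne_zero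
  have hcd : (f.comp (X ^ p)).natDegree = d * p := by
    rw [natDegree_comp, natDegree_X_pow, hd]
  have hc0 : f.comp (X ^ p) ≠ 0 := by
    rw [← expand_eq_comp_X_pow]
    exact (expand_ne_zero hppos).mpr hf0
  have main : ∀ g : Polynomial ℤ, Irreducible g → g ∣ f.comp (X ^ p) → d ≤ g.natDegree := by
    intro g hg hgd
    by_cases hg0 : g.natDegree = 0
    · -- g is a constant; contradiction with primitivity of f
      exfalso
      obtain ⟨c, rfl⟩ : ∃ c, g = C c := ⟨g.coeff 0, eq_C_of_natDegree_eq_zero hg0⟩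
      have hcf : C c ∣ f := by
        rw [C_dvd_iff_dvd_coeff]
        intro n
        have h1 : c ∣ (f.comp (X ^ p)).coeff (n * p) := by
          rw [C_dvd_iff_dvd_coeff] at hgd
          exact hgd (n * p)
        rwa [← expand_eq_comp_X_pow, coeff_expand_mul hppos] at h1
      exact hg.not_isUnit (isUnit_C.mpr (hfprim c hcf))
    · -- g has positive degree
      have hgdeg : 1 ≤ g.natDegree := Nat.one_le_iff_ne_zero.mpr hg0
      have hgprim : g.IsPrimitive := irred_isPrimitive g hg hgdeg
      set fQ : Polynomial ℚ := f.map (Int.castRingHom ℚ) with hfQ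
      set gQ : Polynomial ℚ := g.map (Int.castRingHom ℚ) with hgQ
      have hfQirr : Irreducible fQ :=
        (IsPrimitive.Int.irreducible_iff_irreducible_map_cast hfprim).mp hf
      have hgQirr : Irreducible gQ :=
        (IsPrimitive.Int.irreducible_iff_irreducible_map_cast hgprim).mp hg
      have hgQdeg : gQ.natDegree = g.natDegree := natDegree_map_eq_of_injective
        (fun a b hab => by simpa using hab) g
      have hfQdeg : fQ.natDegree = d := hd ▸ natDegree_map_eq_of_injective
        (fun a b hab => by simpa using hab) f
      have hdvdQ : gQ ∣ fQ.comp (X ^ p) := by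
        have := Polynomial.map_dvd (Int.castRingHom ℚ) hgd
        rwa [map_comp, Polynomial.map_pow, map_X] at this
      -- get a root of gQ in the algebraic closure
      set A := AlgebraicClosure ℚ
      obtain ⟨α, hα⟩ : ∃ α : A, (gQ.map (algebraMap ℚ A)).IsRoot α := by
        apply IsAlgClosed.exists_root
        rw [degree_map]
        intro h
        have := natDegree_eq_zero_iff_degree_le_zero.mpr (le_of_eq h)
        omega
      have hαroot : Polynomial.aeval α gQ = 0 := by
        rwa [aeval_def, eval₂_eq_eval_map]
      have hαproot : Polynomial.aeval (α ^ p) fQ = 0 := by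
        have h1 : Polynomial.aeval α (fQ.comp (X ^ p)) = 0 := by
          obtain ⟨q, hq⟩ := hdvdQ
          rw [hq, map_mul, hαroot, zero_mul]
        rwa [aeval_comp, map_pow, aeval_X] at h1
      have hαint : IsIntegral ℚ α :=
        (show IsAlgebraic ℚ α from ⟨gQ, hgQirr.ne_zero, hαroot⟩).isIntegral
      have hαpint : IsIntegral ℚ (α ^ p) := hαint.pow p
      -- minpoly of α is associated to gQ
      have hmin_g : (minpoly ℚ α).natDegree = gQ.natDegree := by
        have hdvd : minpoly ℚ α ∣ gQ := minpoly.dvd ℚ α hαroot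
        have hassoc : Associated (minpoly ℚ α) gQ :=
          (minpoly.irreducible hαint).associated_of_dvd hgQirr hdvd
        exact natDeg_assoc hassoc hgQirr.ne_zero
      -- minpoly of α^p is associated to fQ
      have hmin_f : (minpoly ℚ (α ^ p)).natDegree = d := by
        have hdvd : minpoly ℚ (α ^ p) ∣ fQ := minpoly.dvd ℚ (α ^ p) hαproot
        have hassoc : Associated (minpoly ℚ (α ^ p)) fQ :=
          (minpoly.irreducible hαpint).associated_of_dvd hfQirr hdvd
        rw [natDeg_assoc hassoc hfQirr.ne_zero, hfQdeg]
      -- now compare degrees via intermediate field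
      set E := IntermediateField.adjoin ℚ {α}
      haveI : FiniteDimensional ℚ E := IntermediateField.adjoin.finiteDimensional hαint
      have hαE : α ∈ E := IntermediateField.mem_adjoin_simple_self ℚ α
      set β : E := ⟨α ^ p, pow_mem hαE p⟩
      have hβeq : minpoly ℚ β = minpoly ℚ (α ^ p) := by
        have : algebraMap E A β = α ^ p := rfl
        rw [← this, minpoly.algebraMap_eq (algebraMap E A).injective]
      have hle : (minpoly ℚ β).natDegree ≤ Module.finrank ℚ E := minpoly.natDegree_le β
      have hfr : Module.finrank ℚ E = (minpoly ℚ α).natDegree :=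
        IntermediateField.adjoin.finrank hαint
      rw [hβeq, hmin_f, hfr, hmin_g, hgQdeg] at hle
      exact hle
  refine ⟨main, ?_⟩
  intro s hs hassoc
  have hs0 : ∀ a ∈ s, a ≠ 0 := fun a ha => (hs a ha).ne_zero
  have hprod0 : s.prod ≠ 0 := Multiset.prod_ne_zero (fun h => hs0 0 h rfl)
  have hdeg : s.prod.natDegree = d * p := by
    rw [← hcd]
    exact natDeg_assoc hassoc hc0
  have hsum : s.prod.natDegree = (s.map natDegree).sum := by
    exact natDegree_multiset_prod s (fun h => hs0 0 h rfl)
  have hlow : ∀ a ∈ s, d ≤ a.natDegree := by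
    intro a ha
    exact main a (hs a ha) ((Multiset.dvd_prod ha).trans hassoc.dvd)
  have hcard : Multiset.card s * d ≤ (s.map natDegree).sum := by
    calc Multiset.card s * d = (s.map (fun _ => d)).sum := by
          rw [Multiset.map_const', Multiset.sum_replicate, smul_eq_mul]
      _ ≤ (s.map natDegree).sum := by
          apply Multiset.sum_map_le_sum_map
          exact hlow
  rw [← hsum, hdeg, mul_comm d p] at hcard
  exact Nat.le_of_mul_le_mul_right hcard (by omega)
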